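/- Let T > 0 and let p_T(m) = (1/(√(2π)·T·Z))·exp(-m²/(2T²)) for m ∈ ℤ, where Z is chosen so that Σ_{m∈ℤ} p_T(m) = 1. Then for every k ∈ ℝ, Σ_{m∈ℤ} p_T(m)·cos(km) = (1/Z')·Σ_{j∈ℤ} exp(-(k+2jπ)²T²/2), where Z' = Σ_{j∈ℤ} exp(-(2jπ)²T²/2). That is, the discrete-time cosine transform of the discrete Gaussian is the periodic Gaussian. -/

import Mathlib

open Real

lemma gauss_summable_aux {c : ℝ} (hc : 0 < c) :
    Summable fun m : ℤ => Real.exp (-c * (m : ℝ) ^ 2) := by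
  have hnat : Summable fun n : ℕ => Real.exp (-c * (n : ℝ) ^ 2) := by
    have h := Real.summable_pow_mul_exp_neg_nat_mul 0 hc
    simp only [pow_zero, one_mul] at h
    refine h.of_nonneg_of_le (fun n => (Real.exp_pos _).le) (fun n => ?_)
    apply Real.exp_le_exp.mpr
    have h1 : (n : ℝ) ≤ (n : ℝ) ^ 2 := by
      exact_mod_cast Nat.le_self_pow two_ne_zero n
    have h2 := mul_le_mul_of_nonneg_left h1 hc.le
    linarith
  apply Summable.of_nat_of_neg
  · simpa using hnat
  · convert hnat using 2 with n
    push_cast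
    exacts [rfl, by push_cast; ring_nf]

lemma key_identity (T : ℝ) (hT : 0 < T) (k : ℝ) :
    (∑' m : ℤ, Real.exp (-(m : ℝ) ^ 2 / (2 * T ^ 2)) * Real.cos (k * m))
      = Real.sqrt (2 * π) * T * ∑' j : ℤ, Real.exp (-(k + 2 * j * π) ^ 2 * T ^ 2 / 2) := by
  have hπ : (0 : ℝ) < π := Real.pi_pos
  have hπ' : (π : ℂ) ≠ 0 := by exact_mod_cast hπ.ne'
  have hT' : (T : ℂ) ≠ 0 := by exact_mod_cast hT.ne'
  have hsq : (0:ℝ) < Real.sqrt (2 * π) := Real.sqrt_pos.mpr (by positivity)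
  have hsT : Real.sqrt (2 * π) * T ≠ 0 := by positivity
  have hr : (0 : ℝ) < 1 / (2 * π * T ^ 2) := by positivity
  set a : ℂ := ((1 / (2 * π * T ^ 2) : ℝ) : ℂ) with ha_def
  have ha : 0 < a.re := by rw [ha_def, Complex.ofReal_re]; exact hr
  have ha' : a ≠ 0 := by rw [ha_def]; exact_mod_cast hr.ne'
  set b : ℂ := Complex.I * k / (2 * π) with hb_def
  have H := Complex.tsum_exp_neg_quadratic ha b
  -- rewrite left side terms
  have hL : ∀ n : ℤ, -(π : ℂ) * a * n ^ 2 + 2 * π * b * n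
      = ((-(n : ℝ) ^ 2 / (2 * T ^ 2) : ℝ) : ℂ) + ((k * n : ℝ) : ℂ) * Complex.I := by
    intro n
    rw [ha_def, hb_def]
    push_cast
    field_simp
  -- rewrite right side terms
  have hR : ∀ n : ℤ, -(π : ℂ) / a * ((n : ℂ) + Complex.I * b) ^ 2
      = ((-(k + 2 * (-n : ℤ) * π) ^ 2 * T ^ 2 / 2 : ℝ) : ℂ) := by
    intro n
    rw [ha_def, hb_def]
    have hI : Complex.I * (Complex.I * (k : ℂ) / (2 * π)) = -(k : ℂ) / (2 * π) := by
      rw [mul_div_assoc', ← mul_assoc, Complex.I_mul_I]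
      ring
    rw [hI]
    push_cast
    field_simp
    ring
  simp only [hL, hR] at H
  -- the cpow factor
  have hrp : (1 / (2 * π * T ^ 2) : ℝ) ^ ((1 : ℝ) / 2) = (Real.sqrt (2 * π) * T)⁻¹ := by
    rw [← Real.sqrt_eq_rpow, one_div, Real.sqrt_inv, Real.sqrt_mul (by positivity) (T ^ 2),
      Real.sqrt_sq hT.le]
  have hcpow : 1 / a ^ (1 / 2 : ℂ) = ((Real.sqrt (2 * π) * T : ℝ) : ℂ) := by
    rw [ha_def, show ((1 : ℂ) / 2) = (((1 : ℝ) / 2 : ℝ) : ℂ) by norm_num,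
      ← Complex.ofReal_cpow hr.le, hrp]
    rw [one_div, ← Complex.ofReal_inv, inv_inv]
  rw [hcpow] at H
  -- turn RHS of H into a real number
  have hRHS : (∑' n : ℤ, Complex.exp ((-(k + 2 * (-n : ℤ) * π) ^ 2 * T ^ 2 / 2 : ℝ) : ℂ))
      = ((∑' j : ℤ, Real.exp (-(k + 2 * j * π) ^ 2 * T ^ 2 / 2) : ℝ) : ℂ) := by
    simp_rw [← Complex.ofReal_exp]
    rw [← Complex.ofReal_tsum]
    norm_cast
    have := (Equiv.neg ℤ).tsum_eq (fun j : ℤ => Real.exp (-(k + 2 * j * π) ^ 2 * T ^ 2 / 2))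
    simpa using this
  rw [hRHS, ← Complex.ofReal_mul] at H
  -- summability of the complex series
  have hs' : Summable fun m : ℤ =>
      Complex.exp (((-(m : ℝ) ^ 2 / (2 * T ^ 2) : ℝ) : ℂ) + ((k * m : ℝ) : ℂ) * Complex.I) := by
    apply Summable.of_norm
    have hg := gauss_summable_aux (c := 1 / (2 * T ^ 2)) (by positivity)
    convert hg using 2 with m
    rw [Complex.norm_exp]
    have hre0 : ((((-(m : ℝ) ^ 2 / (2 * T ^ 2)) : ℝ) : ℂ)
        + (((k * m) : ℝ) : ℂ) * Complex.I).re = -(m : ℝ) ^ 2 / (2 * T ^ 2) := by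
      generalize (-(m : ℝ) ^ 2 / (2 * T ^ 2) : ℝ) = x
      generalize ((k * m : ℝ) : ℝ) = y
      simp
    rw [hre0]
    congr 1
    ring
  -- take real parts
  have hre : ∀ m : ℤ, Real.exp (-(m : ℝ) ^ 2 / (2 * T ^ 2)) * Real.cos (k * m)
      = (Complex.exp (((-(m : ℝ) ^ 2 / (2 * T ^ 2) : ℝ) : ℂ)
          + ((k * m : ℝ) : ℂ) * Complex.I)).re := by
    intro m
    have hre0 : ((((-(m : ℝ) ^ 2 / (2 * T ^ 2)) : ℝ) : ℂ)
        + (((k * m) : ℝ) : ℂ) * Complex.I).re = -(m : ℝ) ^ 2 / (2 * T ^ 2) := by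
      generalize (-(m : ℝ) ^ 2 / (2 * T ^ 2) : ℝ) = x
      generalize ((k * m : ℝ) : ℝ) = y
      simp
    have him0 : ((((-(m : ℝ) ^ 2 / (2 * T ^ 2)) : ℝ) : ℂ)
        + (((k * m) : ℝ) : ℂ) * Complex.I).im = k * (m : ℝ) := by
      generalize (-(m : ℝ) ^ 2 / (2 * T ^ 2) : ℝ) = x
      simp
    rw [Complex.exp_re, hre0, him0]
  rw [tsum_congr hre, ← Complex.re_tsum hs', H, Complex.ofReal_re]

theorem stmt_7 (T : ℝ) (hT : 0 < T)
    (Z : ℝ)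
    (hZ : Z = ∑' m : ℤ, (1 / (Real.sqrt (2 * π) * T)) * Real.exp (-(m : ℝ) ^ 2 / (2 * T ^ 2))) :
    ∀ k : ℝ,
      (∑' m : ℤ, ((1 / (Real.sqrt (2 * π) * T * Z)) *
          Real.exp (-(m : ℝ) ^ 2 / (2 * T ^ 2))) * Real.cos (k * m))
        = (∑' j : ℤ, Real.exp (-(k + 2 * j * π) ^ 2 * T ^ 2 / 2)) /
          (∑' j : ℤ, Real.exp (-(2 * j * π) ^ 2 * T ^ 2 / 2)) := by
  intro k
  have hsq : (0:ℝ) < Real.sqrt (2 * π) := Real.sqrt_pos.mpr (by positivity)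
  have hsT : Real.sqrt (2 * π) * T ≠ 0 := by positivity
  have hZ0 : (0:ℝ) < ∑' j : ℤ, Real.exp (-(2 * j * π) ^ 2 * T ^ 2 / 2) := by
    have hsum : Summable fun j : ℤ => Real.exp (-(2 * j * π) ^ 2 * T ^ 2 / 2) := by
      have hg := gauss_summable_aux (c := 2 * π ^ 2 * T ^ 2) (by positivity)
      convert hg using 2 with j
      congr 1
      ring
    refine Summable.tsum_pos hsum (fun j => (Real.exp_pos _).le) 0 (Real.exp_pos _)
  have hZeq : Z = ∑' j : ℤ, Real.exp (-(2 * j * π) ^ 2 * T ^ 2 / 2) := by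
    rw [hZ, tsum_mul_left]
    have h0 : (∑' m : ℤ, Real.exp (-(m : ℝ) ^ 2 / (2 * T ^ 2)))
        = ∑' m : ℤ, Real.exp (-(m : ℝ) ^ 2 / (2 * T ^ 2)) * Real.cos (0 * m) := by
      refine tsum_congr fun m => by simp
    rw [h0, key_identity T hT 0]
    have h1 : (∑' j : ℤ, Real.exp (-(0 + 2 * j * π) ^ 2 * T ^ 2 / 2))
        = ∑' j : ℤ, Real.exp (-(2 * j * π) ^ 2 * T ^ 2 / 2) := by
      refine tsum_congr fun j => by ring_nf
    rw [h1]
    field_simp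
  have hZne : Z ≠ 0 := by rw [hZeq]; exact hZ0.ne'
  calc (∑' m : ℤ, ((1 / (Real.sqrt (2 * π) * T * Z)) *
          Real.exp (-(m : ℝ) ^ 2 / (2 * T ^ 2))) * Real.cos (k * m))
      = (1 / (Real.sqrt (2 * π) * T * Z)) *
          ∑' m : ℤ, Real.exp (-(m : ℝ) ^ 2 / (2 * T ^ 2)) * Real.cos (k * m) := by
        rw [← tsum_mul_left]
        exact tsum_congr fun m => by ring
    _ = (1 / (Real.sqrt (2 * π) * T * Z)) * (Real.sqrt (2 * π) * T *
          ∑' j : ℤ, Real.exp (-(k + 2 * j * π) ^ 2 * T ^ 2 / 2)) := by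
        rw [key_identity T hT k]
    _ = (∑' j : ℤ, Real.exp (-(k + 2 * j * π) ^ 2 * T ^ 2 / 2)) /
          (∑' j : ℤ, Real.exp (-(2 * j * π) ^ 2 * T ^ 2 / 2)) := by
        rw [← hZeq]
        field_simp
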